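/- With Φ_k as above, let P: F_p^{2k} → F_p^k be the projection onto the even coordinates (u_{12},…,u_{k2}) and Q the projection onto odd coordinates. A subspace V ⊆ F_p^{2k} is such that some translate V + a is a maximal unlinked set if and only if V = P(V)^⊥ ⊕ P(V), where P(V)^⊥ is the orthogonal complement in F_p^k with respect to the standard bilinear form, and ⊕ refers to the decomposition F_p^{2k} = ker P ⊕ ker Q. -/

import Mathlib

open Finset

/-- `Φ_k(u,v) = ∑ i, u_{i1} (v_{i2} - u_{i2})` on `𝔽_p^{2k}`, realized as
`Fin k → ZMod p × ZMod p` (first component = odd coordinate, second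
component = even coordinate). -/
def Phik (p k : ℕ) (u v : Fin k → ZMod p × ZMod p) : ZMod p :=
  ∑ i, (u i).1 * ((v i).2 - (u i).2)

/-- A set is unlinked if `Φ_k` vanishes on all ordered pairs from it. -/
def Unlinked (p k : ℕ) (U : Set (Fin k → ZMod p × ZMod p)) : Prop :=
  ∀ u ∈ U, ∀ v ∈ U, Phik p k u v = 0

/-- A maximal unlinked set: unlinked and not properly contained in any other
unlinked set. -/
def MaximalUnlinked (p k : ℕ) (U : Set (Fin k → ZMod p × ZMod p)) : Prop :=
  Unlinked p k U ∧ ∀ U', Unlinked p k U' → U ⊆ U' → U' = U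

noncomputable def dotB (p k : ℕ) : LinearMap.BilinForm (ZMod p) (Fin k → ZMod p) :=
  LinearMap.mk₂ (ZMod p) (fun x y => ∑ i, x i * y i)
    (fun x x' y => by simp [add_mul, Finset.sum_add_distrib])
    (fun c x y => by simp [Finset.mul_sum, mul_assoc])
    (fun x y y' => by simp [mul_add, Finset.sum_add_distrib])
    (fun c x y => by simp [Finset.mul_sum, mul_left_comm])

lemma dotB_apply (p k : ℕ) (x y : Fin k → ZMod p) : dotB p k x y = ∑ i, x i * y i := rfl

lemma dotB_comm (p k : ℕ) (x y : Fin k → ZMod p) : dotB p k x y = dotB p k y x := by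
  simp only [dotB_apply]; exact Finset.sum_congr rfl fun i _ => mul_comm _ _

lemma dotB_refl (p k : ℕ) : (dotB p k).IsRefl := by
  intro x y h; rw [dotB_comm]; exact h

lemma dotB_nondeg (p k : ℕ) [Fact (Nat.Prime p)] : (dotB p k).Nondegenerate := by
  refine ⟨fun x hx => ?_, fun x hx => ?_⟩ <;>
  · funext j
    have := hx (Pi.single j 1)
    simpa [dotB_apply, Pi.single_apply, mul_ite, ite_mul, Finset.sum_ite_eq'] using this

lemma mem_of_perp_perp {p k : ℕ} [Fact (Nat.Prime p)]
    (W : Submodule (ZMod p) (Fin k → ZMod p)) (z : Fin k → ZMod p)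
    (hz : ∀ c : Fin k → ZMod p, (∀ w ∈ W, ∑ i, c i * w i = 0) → ∑ i, c i * z i = 0) :
    z ∈ W := by
  rw [← (dotB p k).orthogonal_orthogonal (dotB_nondeg p k) (dotB_refl p k) W]
  intro c hc
  have : ∀ w ∈ W, ∑ i, c i * w i = 0 := by
    intro w hw
    have := hc w hw
    rwa [dotB_comm] at this
  exact hz c this

/-- projection onto even (second) coordinates, as a linear map -/
def evenProj (p k : ℕ) : (Fin k → ZMod p × ZMod p) →ₗ[ZMod p] (Fin k → ZMod p) :=
  LinearMap.pi fun i => (LinearMap.snd (ZMod p) (ZMod p) (ZMod p)).comp (LinearMap.proj i)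

lemma evenProj_apply (p k : ℕ) (x : Fin k → ZMod p × ZMod p) (i : Fin k) :
    evenProj p k x i = (x i).2 := rfl

/-- A subspace `V ⊆ 𝔽_p^{2k}` has a translate `V + a` which is a maximal
unlinked set if and only if `V = P(V)^⊥ ⊕ P(V)`, i.e. membership in `V` is
equivalent to: the odd-coordinate part is orthogonal to `P(V)` and the
even-coordinate part lies in `P(V)`, where `P` is projection onto even
coordinates. -/
theorem translate_maximalUnlinked_iff_perp_oplus
    (p k : ℕ) (hp : p.Prime) (hk : 1 ≤ k)
    (V : Submodule (ZMod p) (Fin k → ZMod p × ZMod p)) :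
    (∃ a, MaximalUnlinked p k ((fun x => x + a) '' (V : Set _))) ↔
      (∀ x : Fin k → ZMod p × ZMod p, x ∈ V ↔
        ((∀ v ∈ V, ∑ i, (x i).1 * (v i).2 = 0) ∧
          ∃ v ∈ V, ∀ i, (x i).2 = (v i).2)) := by
  haveI : Fact p.Prime := ⟨hp⟩
  constructor
  · rintro ⟨a, hU, hmax⟩
    set U : Set (Fin k → ZMod p × ZMod p) := (fun x => x + a) '' (V : Set _) with hUdef
    -- basic consequence of unlinkedness of U
    have h1 : ∀ v ∈ V, ∀ w ∈ V,
        ∑ i, ((v i).1 + (a i).1) * ((w i).2 - (v i).2) = 0 := by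
      intro v hv w hw
      have := hU (v + a) ⟨v, hv, rfl⟩ (w + a) ⟨w, hw, rfl⟩
      simpa [Phik, add_sub_add_right_eq_sub] using this
    have ha : ∀ w ∈ V, ∑ i, (a i).1 * (w i).2 = 0 := by
      intro w hw
      have := h1 0 V.zero_mem w hw
      simpa using this
    have hperp : ∀ v ∈ V, ∀ w ∈ V, ∑ i, (v i).1 * (w i).2 = 0 := by
      intro v hv w hw
      have h2 := h1 v hv w hw
      have h3 := h1 v hv 0 V.zero_mem
      have h4 : ∑ i, ((v i).1 + (a i).1) * (w i).2 = 0 := by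
        have : ∑ i, ((v i).1 + (a i).1) * ((w i).2 - (v i).2)
              - ∑ i, ((v i).1 + (a i).1) * ((0 : ZMod p) - (v i).2)
            = ∑ i, ((v i).1 + (a i).1) * (w i).2 := by
          rw [← Finset.sum_sub_distrib]
          congr 1; funext i; ring
        rw [← this]
        simp only [h2]
        have h3' : ∑ i, ((v i).1 + (a i).1) * ((0:ZMod p) - (v i).2) = 0 := by
          simpa using h3
        rw [h3']; ring
      have : ∑ i, ((v i).1 + (a i).1) * (w i).2
          = ∑ i, (v i).1 * (w i).2 + ∑ i, (a i).1 * (w i).2 := by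
        rw [← Finset.sum_add_distrib]; congr 1; funext i; ring
      rw [this, ha w hw, add_zero] at h4
      exact h4
    intro x
    constructor
    · intro hx
      exact ⟨fun v hv => hperp x hx v hv, x, hx, fun i => rfl⟩
    · rintro ⟨hx1, w, hwV, hw2⟩
      -- show U ∪ {x + a} is unlinked, hence equals U by maximality
      have key : Unlinked p k (U ∪ {x + a}) := by
        rintro u (hu | hu) v (hv | hv)
        · exact hU u hu v hv
        · -- u ∈ U, v = x + a
          obtain ⟨u', hu', rfl⟩ := hu
          rcases Set.mem_singleton_iff.mp hv with rfl
          show ∑ i, ((u' i).1 + (a i).1) * ((x i).2 + (a i).2 - ((u' i).2 + (a i).2)) = 0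
          have : ∀ i : Fin k, (x i).2 + (a i).2 - ((u' i).2 + (a i).2)
              = ((w - u') i).2 := by
            intro i; simp only [Pi.sub_apply, Prod.snd_sub, hw2 i]; ring
          simp only [this]
          have := h1 u' hu' w hwV
          calc ∑ i, ((u' i).1 + (a i).1) * ((w - u') i).2
              = ∑ i, ((u' i).1 + (a i).1) * ((w i).2 - (u' i).2) := by
                apply Finset.sum_congr rfl; intro i _; rfl
            _ = 0 := this
        · -- u = x + a, v ∈ U
          rcases Set.mem_singleton_iff.mp hu with rfl
          obtain ⟨v', hv', rfl⟩ := hv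
          show ∑ i, ((x i).1 + (a i).1) * ((v' i).2 + (a i).2 - ((x i).2 + (a i).2)) = 0
          have heq : ∀ i : Fin k, (v' i).2 + (a i).2 - ((x i).2 + (a i).2)
              = ((v' - w) i).2 := by
            intro i; simp only [Pi.sub_apply, Prod.snd_sub, hw2 i]; ring
          simp only [heq]
          have hsub : v' - w ∈ V := V.sub_mem hv' hwV
          have e1 := hx1 (v' - w) hsub
          have e2 := ha (v' - w) hsub
          have : ∑ i, ((x i).1 + (a i).1) * ((v' - w) i).2
              = ∑ i, (x i).1 * ((v' - w) i).2 + ∑ i, (a i).1 * ((v' - w) i).2 := by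
            rw [← Finset.sum_add_distrib]; congr 1; funext i; ring
          rw [this, e1, e2, add_zero]
        · rcases Set.mem_singleton_iff.mp hu with rfl
          rcases Set.mem_singleton_iff.mp hv with rfl
          simp [Phik]
      have := hmax (U ∪ {x + a}) key Set.subset_union_left
      have hxa : x + a ∈ U := by
        rw [← this]; exact Or.inr rfl
      obtain ⟨v, hv, hva⟩ := hxa
      have : v = x := by
        have := add_right_cancel hva
        exact this
      rwa [← this]
  · intro H
    refine ⟨0, ?_, ?_⟩
    · -- V itself (translated by 0) is unlinked
      intro u hu v hv
      simp only [Set.mem_image] at hu hv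
      obtain ⟨u', hu', rfl⟩ := hu
      obtain ⟨v', hv', rfl⟩ := hv
      simp only [add_zero]
      have hu1 := ((H u').mp hu').1
      have : Phik p k u' v' = ∑ i, (u' i).1 * ((v' - u') i).2 := by
        apply Finset.sum_congr rfl; intro i _; rfl
      rw [Phik] at this ⊢
      rw [this]
      exact hu1 (v' - u') (V.sub_mem hv' hu')
    · intro U' hU' hsub
      have hsub' : (V : Set _) ⊆ U' := by
        intro v hv; exact hsub ⟨v, hv, by simp⟩
      apply Set.Subset.antisymm
      · intro z hz
        rw [Set.mem_image]
        refine ⟨z, ?_, by simp⟩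
        rw [SetLike.mem_coe, H z]
        have h0 : (0 : Fin k → ZMod p × ZMod p) ∈ U' := hsub' V.zero_mem
        constructor
        · intro v hv
          have e1 := hU' z hz (v) (hsub' hv)
          have e2 := hU' z hz 0 h0
          rw [Phik] at e1 e2
          have : ∑ i, (z i).1 * ((v i).2 - (z i).2)
              - ∑ i, (z i).1 * (((0:Fin k → ZMod p × ZMod p) i).2 - (z i).2)
              = ∑ i, (z i).1 * (v i).2 := by
            rw [← Finset.sum_sub_distrib]; congr 1; funext i
            simp; ring
          rw [e1, e2] at this
          simpa using this.symm
        · -- even part of z lies in P(V)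
          set W : Submodule (ZMod p) (Fin k → ZMod p) := V.map (evenProj p k) with hW
          have hzW : (fun i => (z i).2) ∈ W := by
            apply mem_of_perp_perp
            intro c hc
            -- the vector (c, 0) lies in V
            have hcV : (fun i => (c i, 0)) ∈ V := by
              rw [H]
              constructor
              · intro v hv
                exact hc (evenProj p k v) (Submodule.mem_map_of_mem hv)
              · exact ⟨0, V.zero_mem, fun i => rfl⟩
            have := hU' (fun i => (c i, 0)) (hsub' hcV) z hz
            rw [Phik] at this
            simpa using this
          obtain ⟨v, hv, hve⟩ := hzW
          exact ⟨v, hv, fun i => (congrFun hve i).symm⟩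
      · intro u hu
        obtain ⟨v, hv, rfl⟩ := hu
        simpa using hsub' hv
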